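/- arXiv:2112.02946 — 2 statements merged into one kernel-verified Lean document; each statement's English description precedes it below -/
import Mathlib

section
/- Let N be a positive natural number, let η be the 2N×2N complex matrix η = diag(1_N, −1_N), and let H be a 2N×2N Hermitian positive definite complex matrix. Then there exists a 2N×2N complex matrix P with P η P† = η (a para-unitary matrix) such that P† H P is a diagonal matrix all of whose diagonal entries are real and strictly positive. -/
open Matrix
open scoped ComplexOrder

namespace ColpaAux

variable {m : Type*} [Fintype m] [DecidableEq m]

noncomputable def rowKer {ι : Type*} (A : Matrix m m ℂ) (f : ι → m) : Submodule ℂ (m → ℂ) :=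
  LinearMap.ker ((LinearMap.funLeft ℂ ℂ f).comp A.mulVecLin)

lemma mem_rowKer {ι : Type*} {A : Matrix m m ℂ} {f : ι → m} {x : m → ℂ} :
    x ∈ rowKer A f ↔ ∀ j, (A *ᵥ x) (f j) = 0 := by
  simp [rowKer, LinearMap.mem_ker, funext_iff, Function.comp]

lemma card_le_finrank_rowKer_add {ι : Type*} [Fintype ι] (A : Matrix m m ℂ) (f : ι → m) :
    Fintype.card m ≤ Module.finrank ℂ (rowKer A f) + Fintype.card ι := by
  classical
  have h := LinearMap.finrank_range_add_finrank_ker ((LinearMap.funLeft ℂ ℂ f).comp A.mulVecLin)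
  have h2 : Module.finrank ℂ
      (LinearMap.range ((LinearMap.funLeft ℂ ℂ f).comp A.mulVecLin)) ≤ Fintype.card ι := by
    simpa [Module.finrank_fintype_fun_eq_card] using
      Submodule.finrank_le (LinearMap.range ((LinearMap.funLeft ℂ ℂ f).comp A.mulVecLin))
  rw [Module.finrank_fintype_fun_eq_card] at h
  unfold rowKer
  omega

lemma phi_eq (B : Matrix m m ℂ) (lam : m → ℝ) (v : m → ℂ) :
    star v ⬝ᵥ ((B * diagonal (Complex.ofReal ∘ lam) * Bᴴ) *ᵥ v)
      = ∑ i, (lam i : ℂ) * (star ((Bᴴ *ᵥ v) i) * ((Bᴴ *ᵥ v) i)) := by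
  have hrow : star v ᵥ* B = star (Bᴴ *ᵥ v) := by
    rw [star_mulVec, conjTranspose_conjTranspose]
  rw [← mulVec_mulVec, ← mulVec_mulVec, dotProduct_mulVec, hrow]
  simp only [dotProduct, mulVec_diagonal, Function.comp_apply, Pi.star_apply]
  exact Finset.sum_congr rfl fun i _ => by ring

lemma star_mul_self_pos {z : ℂ} (hz : z ≠ 0) : 0 < star z * z := by
  have h : star z * z = ((Complex.normSq z : ℝ) : ℂ) := by
    rw [Complex.star_def, mul_comm, Complex.mul_conj]
  rw [h]
  exact_mod_cast Complex.normSq_pos.mpr hz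

lemma aux_contra {M : Matrix m m ℂ} {W₁ W₂ : Submodule ℂ (m → ℂ)}
    (h1 : ∀ v ∈ W₁, 0 ≤ star v ⬝ᵥ (M *ᵥ v))
    (h2 : ∀ v ∈ W₂, v ≠ 0 → star v ⬝ᵥ (M *ᵥ v) < 0)
    (hcard : Fintype.card m < Module.finrank ℂ W₁ + Module.finrank ℂ W₂) : False := by
  have hsum := Submodule.finrank_sup_add_finrank_inf_eq W₁ W₂
  have hsup : Module.finrank ℂ ↥(W₁ ⊔ W₂) ≤ Fintype.card m := by
    simpa [Module.finrank_fintype_fun_eq_card] using Submodule.finrank_le (W₁ ⊔ W₂)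
  have hpos : 0 < Module.finrank ℂ ↥(W₁ ⊓ W₂) := by omega
  have : Nontrivial ↥(W₁ ⊓ W₂) := Module.nontrivial_of_finrank_pos hpos
  obtain ⟨v, hv⟩ := exists_ne (0 : ↥(W₁ ⊓ W₂))
  have hv0 : (v : m → ℂ) ≠ 0 := fun h => hv (Subtype.ext h)
  have hm := v.2
  rw [Submodule.mem_inf] at hm
  exact ((h1 v hm.1).not_gt (h2 v hm.2 hv0))

lemma count_le (B C : Matrix m m ℂ) (lam eps : m → ℝ)
    (heq : B * diagonal (Complex.ofReal ∘ lam) * Bᴴ = C * diagonal (Complex.ofReal ∘ eps) * Cᴴ)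
    (hC : ∀ v : m → ℂ, Cᴴ *ᵥ v = 0 → v = 0) :
    (Finset.univ.filter fun i => eps i < 0).card ≤
      (Finset.univ.filter fun i => lam i < 0).card := by
  by_contra hlt
  push_neg at hlt
  have hr₁ := card_le_finrank_rowKer_add Bᴴ (Subtype.val : {i // lam i < 0} → m)
  have hr₂ := card_le_finrank_rowKer_add Cᴴ (Subtype.val : {i // ¬ eps i < 0} → m)
  rw [Fintype.card_subtype] at hr₁ hr₂
  have hcc : (Finset.univ.filter fun i => eps i < 0).card +
      (Finset.univ.filter fun i => ¬ eps i < 0).card = Fintype.card m := by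
    rw [Finset.card_filter_add_card_filter_not, Finset.card_univ]
  refine aux_contra (M := B * diagonal (Complex.ofReal ∘ lam) * Bᴴ)
    (W₁ := rowKer Bᴴ (Subtype.val : {i // lam i < 0} → m))
    (W₂ := rowKer Cᴴ (Subtype.val : {i // ¬ eps i < 0} → m)) ?_ ?_ (by omega)
  · intro v hv
    rw [phi_eq]
    apply Finset.sum_nonneg
    intro i _
    by_cases hi : lam i < 0
    · have h0 : (Bᴴ *ᵥ v) i = 0 := mem_rowKer.mp hv ⟨i, hi⟩
      simp [h0]
    · have h1 : (0:ℂ) ≤ (lam i : ℂ) := by exact_mod_cast not_lt.mp hi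
      exact mul_nonneg h1 (star_mul_self_nonneg _)
  · intro v hv hv0
    rw [heq, phi_eq]
    have hy : Cᴴ *ᵥ v ≠ 0 := fun h => hv0 (hC v h)
    obtain ⟨i₀, hi₀⟩ : ∃ i, (Cᴴ *ᵥ v) i ≠ 0 := by
      by_contra h; push_neg at h; exact hy (funext h)
    have hi₀eps : eps i₀ < 0 := by
      by_contra h
      exact hi₀ (mem_rowKer.mp hv ⟨i₀, h⟩)
    have hlt' : ∑ i, (eps i : ℂ) * (star ((Cᴴ *ᵥ v) i) * ((Cᴴ *ᵥ v) i)) < ∑ _i : m, (0:ℂ) := by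
      apply Finset.sum_lt_sum
      · intro i _
        by_cases hi : eps i < 0
        · have h1 : (eps i : ℂ) ≤ 0 := by exact_mod_cast le_of_lt hi
          exact mul_nonpos_of_nonpos_of_nonneg h1 (star_mul_self_nonneg _)
        · have h0 : (Cᴴ *ᵥ v) i = 0 := mem_rowKer.mp hv ⟨i, hi⟩
          simp [h0]
      · refine ⟨i₀, Finset.mem_univ _, ?_⟩
        have h1 : (eps i₀ : ℂ) < 0 := by exact_mod_cast hi₀eps
        exact mul_neg_of_neg_of_pos h1 (star_mul_self_pos hi₀)
    simpa using hlt'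

end ColpaAux

open ColpaAux

/-- Colpa's para-unitary diagonalization theorem, 'if' direction: a Hermitian
positive definite `2N × 2N` matrix `H` can be para-unitarily diagonalized into a
diagonal matrix with all diagonal entries real and strictly positive. -/
theorem colpa_paraunitary_diagonalization_of_posDef
    (N : ℕ) (hN : 0 < N)
    (η : Matrix (Fin N ⊕ Fin N) (Fin N ⊕ Fin N) ℂ)
    (hη : η = Matrix.fromBlocks 1 0 0 (-1))
    (H : Matrix (Fin N ⊕ Fin N) (Fin N ⊕ Fin N) ℂ)
    (hH : H.PosDef) :
    ∃ P : Matrix (Fin N ⊕ Fin N) (Fin N ⊕ Fin N) ℂ,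
      P * η * Pᴴ = η ∧
      (Pᴴ * H * P).IsDiag ∧
      ∀ j, ∃ r : ℝ, 0 < r ∧ (Pᴴ * H * P) j j = (r : ℂ) := by
  have hHps := hH.posSemidef
  open scoped MatrixOrder in
  set K := CFC.sqrt H with hKdef
  have hKH : K.IsHermitian := by open scoped MatrixOrder in exact (CFC.sqrt_nonneg H).posSemidef.1
  have hKK : K * K = H := by open scoped MatrixOrder in exact CFC.sqrt_mul_sqrt_self H hHps.nonneg
  have hdetK : IsUnit K.det := by
    have h1 : IsUnit (K.det * K.det) := by
      rw [← det_mul, hKK]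
      exact (Matrix.isUnit_iff_isUnit_det H).mp hH.isUnit
    exact isUnit_of_mul_isUnit_left h1
  have hKinv : K * K⁻¹ = 1 := mul_nonsing_inv _ hdetK
  have hKinv' : K⁻¹ * K = 1 := nonsing_inv_mul _ hdetK
  set ε : Fin N ⊕ Fin N → ℝ := Sum.elim (fun _ => 1) (fun _ => -1) with hεdef
  have hηdiag : η = diagonal (Complex.ofReal ∘ ε) := by
    rw [hη]
    ext i j
    rcases i with i | i <;> rcases j with j | j <;>
      simp [Matrix.diagonal_apply, Matrix.one_apply, Matrix.neg_apply, hεdef,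
        apply_ite (Neg.neg (α := ℂ))]
  have hηH : ηᴴ = η := by
    rw [hηdiag, diagonal_conjTranspose]
    ext i j
    rcases eq_or_ne i j with rfl | hij
    · simp [Matrix.diagonal_apply_eq, Pi.star_apply, Complex.star_def, Complex.conj_ofReal]
    · simp [Matrix.diagonal_apply_ne _ hij]
  have hM : (K * η * K).IsHermitian := by
    show (K * η * K)ᴴ = K * η * K
    rw [conjTranspose_mul, conjTranspose_mul, hKH.eq, hηH, mul_assoc]
  set lam := hM.eigenvalues with hlamdef
  set U : Matrix (Fin N ⊕ Fin N) (Fin N ⊕ Fin N) ℂ := (hM.eigenvectorUnitary :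
    Matrix (Fin N ⊕ Fin N) (Fin N ⊕ Fin N) ℂ) with hUdef
  have hUU : Uᴴ * U = 1 := by
    have := hM.eigenvectorUnitary.2
    rw [Matrix.mem_unitaryGroup_iff'] at this
    rw [← Matrix.star_eq_conjTranspose]
    exact this
  have hUU' : U * Uᴴ = 1 := by
    have := hM.eigenvectorUnitary.2
    rw [Matrix.mem_unitaryGroup_iff] at this
    rw [← Matrix.star_eq_conjTranspose]
    exact this
  have hspec : K * η * K = U * diagonal (Complex.ofReal ∘ lam) * Uᴴ := by
    have h := hM.spectral_theorem
    rw [← Matrix.star_eq_conjTranspose]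
    exact h
  have hKform : K * η * K = K * diagonal (Complex.ofReal ∘ ε) * Kᴴ := by
    rw [hKH.eq, ← hηdiag]
  have hKinj : ∀ v : Fin N ⊕ Fin N → ℂ, Kᴴ *ᵥ v = 0 → v = 0 := by
    intro v h
    rw [hKH.eq] at h
    have h2 : K⁻¹ *ᵥ (K *ᵥ v) = 0 := by rw [h, mulVec_zero]
    rwa [mulVec_mulVec, hKinv', one_mulVec] at h2
  have hUinj : ∀ v : Fin N ⊕ Fin N → ℂ, Uᴴ *ᵥ v = 0 → v = 0 := by
    intro v h
    have h2 : U *ᵥ (Uᴴ *ᵥ v) = 0 := by rw [h, mulVec_zero]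
    rwa [mulVec_mulVec, hUU', one_mulVec] at h2
  -- counting negative eigenvalues
  have h1 := count_le U K lam ε (hspec.symm.trans hKform) hKinj
  have h2 := count_le K U ε lam (hKform.symm.trans hspec) hUinj
  have hnegdiag : ∀ f : Fin N ⊕ Fin N → ℝ,
      diagonal (Complex.ofReal ∘ (-f)) = -diagonal (Complex.ofReal ∘ f) := by
    intro f
    have hf : (Complex.ofReal ∘ (-f)) = fun i => -((Complex.ofReal ∘ f) i) := by
      funext i
      simp
    rw [diagonal_neg, hf]
  have hnegspec : U * diagonal (Complex.ofReal ∘ (-lam)) * Uᴴ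
      = K * diagonal (Complex.ofReal ∘ (-ε)) * Kᴴ := by
    rw [hnegdiag, hnegdiag]
    simp only [mul_neg, neg_mul]
    rw [hspec.symm.trans hKform]
  have h3 := count_le U K (-lam) (-ε) hnegspec hKinj
  have h4 := count_le K U (-ε) (-lam) hnegspec.symm hUinj
  have hcardεneg : (Finset.univ.filter fun i => ε i < 0).card = N := by
    have hfil : Finset.univ.filter (fun i : Fin N ⊕ Fin N => ε i < 0)
        = Finset.univ.map ⟨Sum.inr, Sum.inr_injective⟩ := by
      ext i
      cases i <;> simp [hεdef]
    rw [hfil, Finset.card_map, Finset.card_univ, Fintype.card_fin]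
  have hcardεpos : (Finset.univ.filter fun i => (-ε) i < 0).card = N := by
    have hfil : Finset.univ.filter (fun i : Fin N ⊕ Fin N => (-ε) i < 0)
        = Finset.univ.map ⟨Sum.inl, Sum.inl_injective⟩ := by
      ext i
      cases i <;> simp [hεdef]
    rw [hfil, Finset.card_map, Finset.card_univ, Fintype.card_fin]
  have hcneg : (Finset.univ.filter fun i => lam i < 0).card = N := by omega
  have hcposneg : (Finset.univ.filter fun i => (-lam) i < 0).card = N := by omega
  have hcpos : (Finset.univ.filter fun i => 0 < lam i).card = N := by
    rw [show (Finset.univ.filter fun i => 0 < lam i)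
        = Finset.univ.filter fun i => (-lam) i < 0 from
      Finset.filter_congr fun i _ => by simp, hcposneg]
  -- every index has a sign
  have hcover : ∀ i, ¬ 0 < lam i → lam i < 0 := by
    intro i hi
    by_contra h2i
    have hdisj : Disjoint (Finset.univ.filter fun j => 0 < lam j)
        (Finset.univ.filter fun j => lam j < 0) := by
      rw [Finset.disjoint_filter]
      intro x _ hx
      exact asymm hx
    have hsub : (Finset.univ.filter fun j => 0 < lam j) ∪
        (Finset.univ.filter fun j => lam j < 0) ⊆ Finset.univ.erase i := by
      intro x hx
      rw [Finset.mem_union] at hx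
      refine Finset.mem_erase.mpr ⟨?_, Finset.mem_univ _⟩
      rintro rfl
      rcases hx with hx | hx
      · exact hi (Finset.mem_filter.mp hx).2
      · exact h2i (Finset.mem_filter.mp hx).2
    have hle := Finset.card_le_card hsub
    rw [Finset.card_union_of_disjoint hdisj, hcpos, hcneg,
      Finset.card_erase_of_mem (Finset.mem_univ i), Finset.card_univ,
      Fintype.card_sum, Fintype.card_fin] at hle
    omega
  -- build the permutation sorting signs
  set p : Fin N ⊕ Fin N → Prop := fun i => 0 < lam i with hpdef
  have hcardp : Fintype.card {i // p i} = N := by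
    rw [Fintype.card_subtype]
    exact hcpos
  have hcardnp : Fintype.card {i // ¬ p i} = N := by
    rw [Fintype.card_subtype_compl, hcardp, Fintype.card_sum, Fintype.card_fin]
    omega
  have ePos : Fin N ≃ {i // p i} := Fintype.equivOfCardEq (by rw [hcardp, Fintype.card_fin])
  have eNeg : Fin N ≃ {i // ¬ p i} := Fintype.equivOfCardEq (by rw [hcardnp, Fintype.card_fin])
  set σ : (Fin N ⊕ Fin N) ≃ (Fin N ⊕ Fin N) :=
    (Equiv.sumCongr ePos eNeg).trans (Equiv.sumCompl p) with hσdef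
  set μ : Fin N ⊕ Fin N → ℝ := fun j => lam (σ j) with hμdef
  have hμl : ∀ i : Fin N, 0 < μ (Sum.inl i) := by
    intro i
    have : σ (Sum.inl i) = (ePos i : Fin N ⊕ Fin N) := by
      simp [hσdef, Equiv.sumCompl_apply_inl]
    rw [hμdef]
    simp only [this]
    exact (ePos i).2
  have hμr : ∀ i : Fin N, μ (Sum.inr i) < 0 := by
    intro i
    have : σ (Sum.inr i) = (eNeg i : Fin N ⊕ Fin N) := by
      simp [hσdef, Equiv.sumCompl_apply_inr]
    rw [hμdef]
    simp only [this]
    exact hcover _ (eNeg i).2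
  have hμne : ∀ j, μ j ≠ 0 := by
    rintro (i | i)
    · exact ne_of_gt (hμl i)
    · exact ne_of_lt (hμr i)
  -- reordered unitary
  set U' : Matrix (Fin N ⊕ Fin N) (Fin N ⊕ Fin N) ℂ := U.submatrix id σ with hU'def
  have hU'unit : U'ᴴ * U' = 1 := by
    rw [hU'def, conjTranspose_submatrix]
    calc Uᴴ.submatrix (⇑σ) id * U.submatrix id (⇑σ)
        = Uᴴ.submatrix (⇑σ) (⇑(Equiv.refl (Fin N ⊕ Fin N)))
          * U.submatrix (⇑(Equiv.refl (Fin N ⊕ Fin N))) (⇑σ) := by rw [Equiv.coe_refl]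
      _ = (Uᴴ * U).submatrix (⇑σ) (⇑σ) := submatrix_mul_equiv _ _ _ _ _
      _ = 1 := by rw [hUU, submatrix_one_equiv]
  have hM' : K * η * K = U' * diagonal (Complex.ofReal ∘ μ) * U'ᴴ := by
    have hdiag : diagonal (Complex.ofReal ∘ μ) = (diagonal (Complex.ofReal ∘ lam)).submatrix σ σ := by
      rw [submatrix_diagonal_equiv]
      rfl
    refine hspec.trans ?_
    refine Eq.symm ?_
    rw [hU'def, conjTranspose_submatrix, hdiag]
    calc U.submatrix id (⇑σ) * (diagonal (Complex.ofReal ∘ lam)).submatrix (⇑σ) (⇑σ)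
          * Uᴴ.submatrix (⇑σ) id
        = U.submatrix (⇑(Equiv.refl (Fin N ⊕ Fin N))) (⇑σ)
          * (diagonal (Complex.ofReal ∘ lam)).submatrix (⇑σ) (⇑σ)
          * Uᴴ.submatrix (⇑σ) (⇑(Equiv.refl (Fin N ⊕ Fin N))) := by rw [Equiv.coe_refl]
      _ = (U * diagonal (Complex.ofReal ∘ lam)).submatrix (⇑(Equiv.refl (Fin N ⊕ Fin N))) (⇑σ)
          * Uᴴ.submatrix (⇑σ) (⇑(Equiv.refl (Fin N ⊕ Fin N))) := by
            rw [submatrix_mul_equiv]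
      _ = (U * diagonal (Complex.ofReal ∘ lam) * Uᴴ).submatrix
          (⇑(Equiv.refl (Fin N ⊕ Fin N))) (⇑(Equiv.refl (Fin N ⊕ Fin N))) := by
            rw [submatrix_mul_equiv]
      _ = U * diagonal (Complex.ofReal ∘ lam) * Uᴴ := by
            rw [Equiv.coe_refl, submatrix_id_id]
  -- scaling matrix
  set G : Matrix (Fin N ⊕ Fin N) (Fin N ⊕ Fin N) ℂ :=
    diagonal (fun j => (Real.sqrt |μ j| : ℂ)) with hGdef
  have hGH : Gᴴ = G := by
    rw [hGdef, diagonal_conjTranspose]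
    refine congrArg diagonal ?_
    funext j
    simp [Pi.star_apply, Complex.star_def, Complex.conj_ofReal]
  have hGG : G * G = diagonal (fun j => ((|μ j| : ℝ) : ℂ)) := by
    rw [hGdef, diagonal_mul_diagonal]
    refine congrArg diagonal ?_
    funext j
    rw [← Complex.ofReal_mul, Real.mul_self_sqrt (abs_nonneg _)]
  have hGηG : G * η * G = diagonal (Complex.ofReal ∘ μ) := by
    rw [hGdef, hηdiag, diagonal_mul_diagonal, diagonal_mul_diagonal]
    refine congrArg diagonal ?_
    funext j
    rcases j with i | i
    · have h := hμl i
      simp only [Function.comp_apply, hεdef, Sum.elim_inl, Complex.ofReal_one, mul_one]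
      rw [← Complex.ofReal_mul, Real.mul_self_sqrt (abs_nonneg _), abs_of_pos h]
    · have h := hμr i
      simp only [Function.comp_apply, hεdef, Sum.elim_inr, Complex.ofReal_neg,
        Complex.ofReal_one, mul_neg, mul_one]
      rw [neg_mul, ← Complex.ofReal_mul, Real.mul_self_sqrt (abs_nonneg _),
        ← Complex.ofReal_neg, abs_of_neg h, neg_neg]
  have hKiH : K⁻¹ᴴ = K⁻¹ := by
    rw [conjTranspose_nonsing_inv, hKH.eq]
  set P : Matrix (Fin N ⊕ Fin N) (Fin N ⊕ Fin N) ℂ := K⁻¹ * U' * G with hPdef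
  have hPH : Pᴴ = G * U'ᴴ * K⁻¹ := by
    rw [hPdef, conjTranspose_mul, conjTranspose_mul, hGH, hKiH, ← mul_assoc]
  have goal1 : P * η * Pᴴ = η := by
    have e1 : P * η * Pᴴ = K⁻¹ * (U' * ((G * η * G) * (U'ᴴ * K⁻¹))) := by
      rw [hPH, hPdef]
      simp only [mul_assoc]
    rw [e1, hGηG]
    calc K⁻¹ * (U' * (diagonal (Complex.ofReal ∘ μ) * (U'ᴴ * K⁻¹)))
        = K⁻¹ * (U' * diagonal (Complex.ofReal ∘ μ) * U'ᴴ * K⁻¹) := by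
          simp only [mul_assoc]
      _ = K⁻¹ * (K * η * K * K⁻¹) := by rw [← hM']
      _ = K⁻¹ * K * η * (K * K⁻¹) := by simp only [mul_assoc]
      _ = η := by rw [hKinv', hKinv, one_mul, mul_one]
  have hPHP : Pᴴ * H * P = diagonal (fun j => ((|μ j| : ℝ) : ℂ)) := by
    have e1 : Pᴴ * H * P = G * (U'ᴴ * ((K⁻¹ * K) * ((K * K⁻¹) * (U' * G)))) := by
      rw [hPH, hPdef, ← hKK]
      simp only [mul_assoc]
    rw [e1, hKinv', hKinv, one_mul, one_mul, ← mul_assoc U'ᴴ U' G, hU'unit, one_mul, hGG]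
  refine ⟨P, goal1, ?_, ?_⟩
  · rw [hPHP]
    exact isDiag_diagonal _
  · intro j
    refine ⟨|μ j|, abs_pos.mpr (hμne j), ?_⟩
    rw [hPHP, diagonal_apply_eq]
end

section
/- Let N be a positive natural number, η = diag(1_N, −1_N). Let L be an invertible 2N×2N complex matrix and set H = L L†. Let U be a unitary 2N×2N complex matrix and E a diagonal 2N×2N matrix with strictly positive real diagonal entries such that U† (L† η L) U = η E. Let E^{1/2} denote the diagonal matrix whose diagonal entries are the positive square roots of those of E, and define P = (L†)⁻¹ U E^{1/2}. Then P† H P = E and P η P† = η; i.e. P para-unitarily diagonalizes H with spectrum E. -/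
open Matrix

/-- Verification step of Colpa's algorithm: if `H = L * Lᴴ` with `L` invertible,
`U` is unitary, and `Uᴴ * (Lᴴ * η * L) * U = η * E` with `E` diagonal with
strictly positive real diagonal entries, then `P = (Lᴴ)⁻¹ * U * E^{1/2}`
satisfies `Pᴴ * H * P = E` and `P * η * Pᴴ = η`. -/
theorem colpa_verification
    (N : ℕ) (hN : 0 < N)
    (η : Matrix (Fin N ⊕ Fin N) (Fin N ⊕ Fin N) ℂ)
    (hη : η = Matrix.fromBlocks 1 0 0 (-1))
    (L : Matrix (Fin N ⊕ Fin N) (Fin N ⊕ Fin N) ℂ)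
    (hL : IsUnit L)
    (H : Matrix (Fin N ⊕ Fin N) (Fin N ⊕ Fin N) ℂ)
    (hH : H = L * Lᴴ)
    (U : Matrix (Fin N ⊕ Fin N) (Fin N ⊕ Fin N) ℂ)
    (hU : U ∈ Matrix.unitaryGroup (Fin N ⊕ Fin N) ℂ)
    (d : (Fin N ⊕ Fin N) → ℝ) (hd : ∀ i, 0 < d i)
    (E : Matrix (Fin N ⊕ Fin N) (Fin N ⊕ Fin N) ℂ)
    (hE : E = Matrix.diagonal fun i => (d i : ℂ))
    (hdiag : Uᴴ * (Lᴴ * η * L) * U = η * E)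
    (sqrtE : Matrix (Fin N ⊕ Fin N) (Fin N ⊕ Fin N) ℂ)
    (hsqrtE : sqrtE = Matrix.diagonal fun i => (Real.sqrt (d i) : ℂ))
    (P : Matrix (Fin N ⊕ Fin N) (Fin N ⊕ Fin N) ℂ)
    (hPdef : P = (Lᴴ)⁻¹ * U * sqrtE) :
    Pᴴ * H * P = E ∧ P * η * Pᴴ = η := by
  have hLd : IsUnit L.det := isUnit_iff_isUnit_det L |>.mp hL
  have hLHd : IsUnit Lᴴ.det := by
    rw [Matrix.det_conjTranspose]; exact hLd.star
  have hLinvHH : ((Lᴴ)⁻¹)ᴴ = L⁻¹ := by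
    rw [Matrix.conjTranspose_nonsing_inv, Matrix.conjTranspose_conjTranspose]
  have hUU' : Uᴴ * U = 1 := (Matrix.mem_unitaryGroup_iff').mp hU
  have hUU : U * Uᴴ = 1 := (Matrix.mem_unitaryGroup_iff).mp hU
  have hsqrtEH : sqrtEᴴ = sqrtE := by
    rw [hsqrtE, Matrix.diagonal_conjTranspose]
    exact congrArg Matrix.diagonal (funext fun i => Complex.conj_ofReal _)
  have hsq : sqrtE * sqrtE = E := by
    rw [hsqrtE, hE, Matrix.diagonal_mul_diagonal]
    exact congrArg Matrix.diagonal (funext fun i => by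
      rw [← Complex.ofReal_mul, Real.mul_self_sqrt (hd i).le])
  have hLL : Lᴴ * (Lᴴ)⁻¹ = 1 := Matrix.mul_nonsing_inv _ hLHd
  have hLL' : (Lᴴ)⁻¹ * Lᴴ = 1 := Matrix.nonsing_inv_mul _ hLHd
  have hLinv : L⁻¹ * L = 1 := Matrix.nonsing_inv_mul _ hLd
  have hLinv' : L * L⁻¹ = 1 := Matrix.mul_nonsing_inv _ hLd
  constructor
  · rw [hPdef, hH]
    simp only [Matrix.conjTranspose_mul, hsqrtEH, hLinvHH, Matrix.mul_assoc]
    rw [← Matrix.mul_assoc Lᴴ, hLL, Matrix.one_mul,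
        ← Matrix.mul_assoc L⁻¹, hLinv, Matrix.one_mul,
        ← Matrix.mul_assoc Uᴴ, hUU', Matrix.one_mul]
    exact hsq
  · have hηd : η = Matrix.diagonal (Sum.elim (fun _ => (1 : ℂ)) (fun _ => (-1 : ℂ))) := by
      rw [hη]
      ext i j
      rcases i with i | i <;> rcases j with j | j <;>
        simp [Matrix.fromBlocks, Matrix.diagonal_apply, Matrix.one_apply] <;>
        aesop
    have hcomm : sqrtE * η = η * sqrtE := by
      rw [hηd, hsqrtE, Matrix.diagonal_mul_diagonal, Matrix.diagonal_mul_diagonal]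
      exact congrArg Matrix.diagonal (funext fun i => mul_comm _ _)
    have key : sqrtE * η * sqrtE = η * E := by
      rw [hcomm, Matrix.mul_assoc, hsq]
    have hdiag' : η * E = Uᴴ * (Lᴴ * η * L) * U := hdiag.symm
    rw [hPdef]
    calc ((Lᴴ)⁻¹ * U * sqrtE) * η * ((Lᴴ)⁻¹ * U * sqrtE)ᴴ
        = (Lᴴ)⁻¹ * U * (sqrtE * η * sqrtE) * (Uᴴ * L⁻¹) := by
          simp only [Matrix.conjTranspose_mul, hsqrtEH, hLinvHH]
          noncomm_ring
      _ = (Lᴴ)⁻¹ * (U * Uᴴ) * (Lᴴ * η * L) * (U * Uᴴ) * L⁻¹ := by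
          rw [key, hdiag']; noncomm_ring
      _ = η := by
          rw [hUU]
          simp only [Matrix.mul_one]
          calc (Lᴴ)⁻¹ * (Lᴴ * η * L) * L⁻¹
              = ((Lᴴ)⁻¹ * Lᴴ) * η * (L * L⁻¹) := by noncomm_ring
            _ = η := by rw [hLL', hLinv', Matrix.one_mul, Matrix.mul_one]
end
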